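/- Let Λ be an O-lattice in a quadratic space over a number field K, u₁ ∈ Λ nonzero, π the orthogonal projection onto the orthogonal complement of K·u₁, and v₂,…,vₙ linearly independent vectors of π(Λ) with lifts uⱼ ∈ Λ, π(uⱼ) = vⱼ. If the coefficient ideal of u₁ relative to Λ is b⁻¹ (b an integral ideal) and b' is the annihilator ideal of π(Λ) modulo O·v₂ ⊕ ⋯ ⊕ O·vₙ, then the product b·b' is contained in the annihilator of Λ modulo O·u₁ ⊕ ⋯ ⊕ O·uₙ. -/

import Mathlib

open NumberField Module
open scoped nonZeroDivisors

/-- If the coefficient ideal of u₁ relative to Λ is b⁻¹ and b' is the annihilator of π(Λ)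
modulo O·v₂ ⊕ ⋯ ⊕ O·vₙ, then b·b' is contained in the annihilator of Λ modulo
O·u₁ ⊕ ⋯ ⊕ O·uₙ. -/
theorem mul_ideal_subset_annihilator
    (K : Type*) [Field K] [NumberField K]
    (V : Type*) [AddCommGroup V] [Module K V] [Module (𝓞 K) V] [IsScalarTower (𝓞 K) K V]
    (B : V →ₗ[K] V →ₗ[K] K) (hBsymm : ∀ x y : V, B x y = B y x)
    (Λ : Submodule (𝓞 K) V)
    (u₁ : V) (hu₁Λ : u₁ ∈ Λ) (hu₁0 : u₁ ≠ 0) (hanis : B u₁ u₁ ≠ 0)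
    (π : V →ₗ[K] V) (hπ : ∀ x : V, π x = x - (B x u₁ / B u₁ u₁) • u₁)
    (n : ℕ) (v : Fin n → V) (u : Fin n → V)
    (huΛ : ∀ j, u j ∈ Λ) (hπu : ∀ j, π (u j) = v j)
    (hvli : LinearIndependent (𝓞 K) v)
    (b : Ideal (𝓞 K)) (hb : b ≠ 0)
    (hcoeff : ∀ α : K, α • u₁ ∈ Λ ↔ α ∈ ((b : FractionalIdeal (𝓞 K)⁰ K)⁻¹))
    (b' : Ideal (𝓞 K))
    (hb' : ∀ a : 𝓞 K, a ∈ b' ↔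
      ∀ x ∈ Λ.map (π.restrictScalars (𝓞 K)), a • x ∈ Submodule.span (𝓞 K) (Set.range v)) :
    ∀ a ∈ b, ∀ a' ∈ b', ∀ x ∈ Λ,
      (a * a') • x ∈ Submodule.span (𝓞 K) (Set.range (Fin.cons u₁ u)) := by
  intro a ha a' ha' x hx
  have hπsmul : ∀ (r : 𝓞 K) (y : V), π (r • y) = r • π y := fun r y => by
    rw [← algebraMap_smul K r y, map_smul, algebraMap_smul]
  have hπx : π x ∈ Λ.map (π.restrictScalars (𝓞 K)) := ⟨x, hx, rfl⟩
  have h1 : a' • π x ∈ Submodule.span (𝓞 K) (Set.range v) := (hb' a').mp ha' _ hπx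
  obtain ⟨c, hc⟩ := (Submodule.mem_span_range_iff_exists_fun (𝓞 K)).mp h1
  set w : V := a' • x - ∑ j, c j • u j with hwdef
  have hwΛ : w ∈ Λ := Submodule.sub_mem _ (Submodule.smul_mem _ _ hx)
    (Submodule.sum_mem _ fun j _ => Submodule.smul_mem _ _ (huΛ j))
  have hπw : π w = 0 := by
    have : π w = a' • π x - ∑ j, c j • v j := by
      rw [hwdef, map_sub, map_sum, hπsmul]
      congr 1
      exact Finset.sum_congr rfl fun j _ => by rw [hπsmul, hπu]
    rw [this, hc, sub_self]
  set α : K := B w u₁ / B u₁ u₁ with hαdef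
  have hweq : w = α • u₁ := by
    have := hπ w
    rw [hπw] at this
    exact eq_of_sub_eq_zero this.symm
  have hα : α ∈ ((b : FractionalIdeal (𝓞 K)⁰ K))⁻¹ := (hcoeff α).mp (hweq ▸ hwΛ)
  have hamem : (algebraMap (𝓞 K) K a) ∈ (b : FractionalIdeal (𝓞 K)⁰ K) :=
    (FractionalIdeal.mem_coeIdeal _).mpr ⟨a, ha, rfl⟩
  have hmul : (algebraMap (𝓞 K) K a) * α ∈ (1 : FractionalIdeal (𝓞 K)⁰ K) := by
    have h := FractionalIdeal.mul_mem_mul hamem hα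
    rwa [mul_inv_cancel₀ (by
      simpa using (FractionalIdeal.coeIdeal_ne_zero (K := K)).mpr hb)] at h
  obtain ⟨o, ho⟩ := ((FractionalIdeal.mem_one_iff (𝓞 K)⁰).mp hmul)
  rw [Submodule.mem_span_range_iff_exists_fun]
  refine ⟨Fin.cons o (fun j => a * c j), ?_⟩
  rw [Fin.sum_univ_succ]
  simp only [Fin.cons_succ, Fin.cons_zero]
  have haw : a • w = o • u₁ := by
    rw [hweq, ← algebraMap_smul K a (α • u₁), smul_smul, ← ho, algebraMap_smul]
  have : (a * a') • x = a • w + ∑ j, (a * c j) • u j := by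
    rw [hwdef, smul_sub, Finset.smul_sum, mul_smul]
    simp only [smul_smul]
    abel
  rw [this, haw]
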